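/- For the rational function field k(x) viewed inside k((x)) (expansion at 0) and inside k((1/x)) (expansion at ∞), and at each closed point p of ℙ¹, the tame symbols of two nonzero rational functions f, g satisfy the product formula: the product over all closed points p of ℙ¹_k of Norm_{k(p)/k} of the tame symbol at p equals 1 (Weil reciprocity for ℙ¹). -/

import Mathlib

/-- The valuation of a rational function at a finite point `a` of `ℙ¹`. -/
noncomputable def nuAt {k : Type*} [Field k] (a : k) (f : RatFunc k) : ℤ :=
  (f.num.rootMultiplicity a : ℤ) - (f.denom.rootMultiplicity a : ℤ)

/-- The tame symbol of `f, g` at a finite point `a` of `ℙ¹`. -/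
noncomputable def tameAt {k : Type*} [Field k] (a : k) (f g : RatFunc k) : k :=
  (-1 : k) ^ (nuAt a f * nuAt a g) *
    RatFunc.eval (RingHom.id k) a (f ^ nuAt a g * g ^ (-nuAt a f))

/-- The valuation of a rational function at `∞`. -/
noncomputable def nuInf {k : Type*} [Field k] (f : RatFunc k) : ℤ := -f.intDegree

/-- The tame symbol of `f, g` at `∞`: the value at `∞` of the valuation-zero unit
`(−1)^{ν(f)ν(g)} f^{ν(g)} g^{−ν(f)}`, i.e. the ratio of its leading coefficients. -/
noncomputable def tameInf {k : Type*} [Field k] (f g : RatFunc k) : k :=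
  (-1 : k) ^ (nuInf f * nuInf g) *
    ((f ^ nuInf g * g ^ (-nuInf f)).num.leadingCoeff /
      (f ^ nuInf g * g ^ (-nuInf f)).denom.leadingCoeff)

open Polynomial

namespace WeilAux

variable {k : Type*} [Field k]

lemma nuAt_one (a : k) : nuAt a (1 : RatFunc k) = 0 := by
  simp [nuAt, RatFunc.num_one, RatFunc.denom_one,
    rootMultiplicity_eq_zero (by simp [IsRoot] : ¬ IsRoot (1 : k[X]) a)]

lemma nuAt_mul (a : k) {f g : RatFunc k} (hf : f ≠ 0) (hg : g ≠ 0) :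
    nuAt a (f * g) = nuAt a f + nuAt a g := by
  have hfg : f * g ≠ 0 := mul_ne_zero hf hg
  have e := congrArg (rootMultiplicity a) (RatFunc.num_denom_mul f g)
  rw [rootMultiplicity_mul (mul_ne_zero (RatFunc.num_ne_zero hfg)
        (mul_ne_zero f.denom_ne_zero g.denom_ne_zero)),
      rootMultiplicity_mul (mul_ne_zero f.denom_ne_zero g.denom_ne_zero),
      rootMultiplicity_mul (mul_ne_zero
        (mul_ne_zero (RatFunc.num_ne_zero hf) (RatFunc.num_ne_zero hg)) (f*g).denom_ne_zero),
      rootMultiplicity_mul (mul_ne_zero (RatFunc.num_ne_zero hf) (RatFunc.num_ne_zero hg))] at e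
  simp only [nuAt]
  omega

lemma nuAt_inv (a : k) {f : RatFunc k} (hf : f ≠ 0) : nuAt a f⁻¹ = -nuAt a f := by
  have h := nuAt_mul a hf (inv_ne_zero hf)
  rw [mul_inv_cancel₀ hf, nuAt_one] at h
  omega

lemma nuAt_zpow (a : k) {f : RatFunc k} (hf : f ≠ 0) (n : ℤ) :
    nuAt a (f ^ n) = n * nuAt a f := by
  induction n using Int.induction_on with
  | zero => simpa using nuAt_one a
  | succ n ih =>
      rw [zpow_add_one₀ hf, nuAt_mul a (zpow_ne_zero _ hf) hf, ih]; ring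
  | pred n ih =>
      rw [zpow_sub_one₀ hf, nuAt_mul a (zpow_ne_zero _ hf) (inv_ne_zero hf), nuAt_inv a hf, ih]
      ring

lemma eval_ne_zero_of_nuAt_eq_zero {a : k} {f : RatFunc k} (hf : f ≠ 0) (h : nuAt a f = 0) :
    f.num.eval a ≠ 0 ∧ f.denom.eval a ≠ 0 := by
  have hnum := RatFunc.num_ne_zero hf
  have hden := f.denom_ne_zero
  have key : ¬ (f.num.eval a = 0 ∧ f.denom.eval a = 0) := by
    rintro ⟨h1, h2⟩
    obtain ⟨u, v, huv⟩ := f.isCoprime_num_denom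
    have := congrArg (Polynomial.eval a) huv
    simp [h1, h2] at this
  by_cases hd : f.denom.eval a = 0
  · have h1 : 0 < f.denom.rootMultiplicity a := (rootMultiplicity_pos hden).2 hd
    have h2 : 0 < f.num.rootMultiplicity a := by simp only [nuAt] at h; omega
    exact absurd ⟨(rootMultiplicity_pos hnum).1 h2, hd⟩ key
  · refine ⟨fun hn => ?_, hd⟩
    have h1 : 0 < f.num.rootMultiplicity a := (rootMultiplicity_pos hnum).2 hn
    have h2 : 0 < f.denom.rootMultiplicity a := by simp only [nuAt] at h; omega
    exact hd ((rootMultiplicity_pos hden).1 h2)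

/-- evaluation at a finite point as used in the tame symbol -/
noncomputable def evalAt (a : k) (f : RatFunc k) : k := RatFunc.eval (RingHom.id k) a f

lemma evalAt_def (a : k) (f : RatFunc k) :
    RatFunc.eval (RingHom.id k) a f = evalAt a f := rfl

lemma evalAt_eq (a : k) (f : RatFunc k) : evalAt a f = f.num.eval a / f.denom.eval a := rfl

lemma evalAt_one (a : k) : evalAt a (1 : RatFunc k) = 1 := RatFunc.eval_one _ _

lemma evalAt_ne_zero {a : k} {f : RatFunc k} (hf : f ≠ 0) (h : nuAt a f = 0) :
    evalAt a f ≠ 0 := by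
  obtain ⟨h1, h2⟩ := eval_ne_zero_of_nuAt_eq_zero hf h
  rw [evalAt_eq]; exact div_ne_zero h1 h2

lemma evalAt_mul {a : k} {f g : RatFunc k} (hf : f ≠ 0) (hg : g ≠ 0)
    (h1 : nuAt a f = 0) (h2 : nuAt a g = 0) :
    evalAt a (f * g) = evalAt a f * evalAt a g := by
  have h1' : Polynomial.eval₂ (RingHom.id k) a f.denom ≠ 0 :=
    (eval_ne_zero_of_nuAt_eq_zero hf h1).2
  have h2' : Polynomial.eval₂ (RingHom.id k) a g.denom ≠ 0 :=
    (eval_ne_zero_of_nuAt_eq_zero hg h2).2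
  unfold evalAt
  exact RatFunc.eval_mul (f := RingHom.id k) (a := a) h1' h2'

lemma evalAt_inv {a : k} {f : RatFunc k} (hf : f ≠ 0) (h1 : nuAt a f = 0) :
    evalAt a f⁻¹ = (evalAt a f)⁻¹ := by
  have h2 : nuAt a f⁻¹ = 0 := by rw [nuAt_inv a hf, h1, neg_zero]
  have h := evalAt_mul hf (inv_ne_zero hf) h1 h2
  rw [mul_inv_cancel₀ hf, evalAt_one] at h
  exact (inv_eq_of_mul_eq_one_right h.symm).symm

lemma evalAt_zpow {a : k} {f : RatFunc k} (hf : f ≠ 0) (h1 : nuAt a f = 0) (n : ℤ) :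
    evalAt a (f ^ n) = (evalAt a f) ^ n := by
  induction n using Int.induction_on with
  | zero => simpa using evalAt_one a
  | succ n ih =>
      have hz : nuAt a (f ^ (n : ℤ)) = 0 := by rw [nuAt_zpow a hf, h1, mul_zero]
      rw [zpow_add_one₀ hf, evalAt_mul (zpow_ne_zero _ hf) hf hz h1, ih,
        zpow_add_one₀ (evalAt_ne_zero hf h1)]
  | pred n ih =>
      have hz : nuAt a (f ^ (-n : ℤ)) = 0 := by rw [nuAt_zpow a hf, h1, mul_zero]
      rw [zpow_sub_one₀ hf, evalAt_mul (zpow_ne_zero _ hf) (inv_ne_zero hf) hz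
          (by rw [nuAt_inv a hf, h1, neg_zero]), ih, evalAt_inv hf h1,
        zpow_sub_one₀ (evalAt_ne_zero hf h1)]

lemma evalAt_algebraMap (a : k) (p : k[X]) :
    evalAt a (algebraMap k[X] (RatFunc k) p) = p.eval a := by
  rw [evalAt, RatFunc.eval_algebraMap]
  rfl

/-- leading coefficient of the numerator -/
noncomputable def lead (f : RatFunc k) : k := f.num.leadingCoeff

lemma lead_one : lead (1 : RatFunc k) = 1 := by simp [lead, RatFunc.num_one]

lemma lead_ne_zero {f : RatFunc k} (hf : f ≠ 0) : lead f ≠ 0 :=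
  leadingCoeff_ne_zero.2 (RatFunc.num_ne_zero hf)

lemma lead_mul {f g : RatFunc k} (hf : f ≠ 0) (hg : g ≠ 0) :
    lead (f * g) = lead f * lead g := by
  have e := congrArg Polynomial.leadingCoeff (RatFunc.num_denom_mul f g)
  rw [leadingCoeff_mul, leadingCoeff_mul, leadingCoeff_mul, leadingCoeff_mul,
    f.monic_denom.leadingCoeff, g.monic_denom.leadingCoeff, (f*g).monic_denom.leadingCoeff,
    mul_one, mul_one, mul_one] at e
  exact e

lemma lead_inv {f : RatFunc k} (hf : f ≠ 0) : lead f⁻¹ = (lead f)⁻¹ := by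
  have h := lead_mul hf (inv_ne_zero hf)
  rw [mul_inv_cancel₀ hf, lead_one] at h
  exact (inv_eq_of_mul_eq_one_right h.symm).symm

lemma lead_zpow {f : RatFunc k} (hf : f ≠ 0) (n : ℤ) : lead (f ^ n) = (lead f) ^ n := by
  induction n using Int.induction_on with
  | zero => simpa using lead_one
  | succ n ih =>
      rw [zpow_add_one₀ hf, lead_mul (zpow_ne_zero _ hf) hf, ih,
        zpow_add_one₀ (lead_ne_zero hf)]
  | pred n ih =>
      rw [zpow_sub_one₀ hf, lead_mul (zpow_ne_zero _ hf) (inv_ne_zero hf), ih, lead_inv hf,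
        zpow_sub_one₀ (lead_ne_zero hf)]

lemma lead_algebraMap (p : k[X]) : lead (algebraMap k[X] (RatFunc k) p) = p.leadingCoeff := by
  rw [lead, RatFunc.num_algebraMap]


end WeilAux




namespace WeilAux

variable {k : Type*} [Field k]

lemma neg_one_ne_zero' : (-1 : k) ≠ 0 := by norm_num

lemma nuInf_one : nuInf (1 : RatFunc k) = 0 := by simp [nuInf, RatFunc.intDegree_one]

lemma nuInf_mul {f g : RatFunc k} (hf : f ≠ 0) (hg : g ≠ 0) :
    nuInf (f * g) = nuInf f + nuInf g := by
  simp [nuInf, RatFunc.intDegree_mul hf hg]; ring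

/-- the tame symbol at infinity, rewritten via `lead`. -/
lemma tameInf_eq (f g : RatFunc k) :
    tameInf f g = (-1 : k) ^ (nuInf f * nuInf g) * lead (f ^ nuInf g * g ^ (-nuInf f)) := by
  rw [tameInf, (f ^ nuInf g * g ^ (-nuInf f)).monic_denom.leadingCoeff, div_one]; rfl

lemma tameAt_eq (a : k) (f g : RatFunc k) :
    tameAt a f g = (-1 : k) ^ (nuAt a f * nuAt a g) *
      evalAt a (f ^ nuAt a g * g ^ (-nuAt a f)) := rfl

lemma tameAt_eq_one {a : k} {f g : RatFunc k} (h1 : nuAt a f = 0) (h2 : nuAt a g = 0) :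
    tameAt a f g = 1 := by
  rw [tameAt_eq, h1, h2]
  simp [evalAt_one]

lemma nuAt_unit (a : k) {f g : RatFunc k} (hf : f ≠ 0) (hg : g ≠ 0) :
    nuAt a (f ^ nuAt a g * g ^ (-nuAt a f)) = 0 := by
  rw [nuAt_mul a (zpow_ne_zero _ hf) (zpow_ne_zero _ hg), nuAt_zpow a hf, nuAt_zpow a hg]
  ring

lemma tameAt_mul_left (a : k) {f₁ f₂ g : RatFunc k} (h1 : f₁ ≠ 0) (h2 : f₂ ≠ 0)
    (hg : g ≠ 0) : tameAt a (f₁ * f₂) g = tameAt a f₁ g * tameAt a f₂ g := by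
  rw [tameAt_eq, tameAt_eq, tameAt_eq, nuAt_mul a h1 h2]
  have key : (f₁ * f₂) ^ nuAt a g * g ^ (-(nuAt a f₁ + nuAt a f₂))
      = (f₁ ^ nuAt a g * g ^ (-nuAt a f₁)) * (f₂ ^ nuAt a g * g ^ (-nuAt a f₂)) := by
    rw [mul_zpow, neg_add, zpow_add₀ hg]; ring
  rw [key, evalAt_mul (mul_ne_zero (zpow_ne_zero _ h1) (zpow_ne_zero _ hg))
      (mul_ne_zero (zpow_ne_zero _ h2) (zpow_ne_zero _ hg))
      (nuAt_unit a h1 hg) (nuAt_unit a h2 hg),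
    add_mul, zpow_add₀ (neg_one_ne_zero' (k := k))]
  ring

lemma tameAt_mul_right (a : k) {f g₁ g₂ : RatFunc k} (hf : f ≠ 0) (h1 : g₁ ≠ 0)
    (h2 : g₂ ≠ 0) : tameAt a f (g₁ * g₂) = tameAt a f g₁ * tameAt a f g₂ := by
  rw [tameAt_eq, tameAt_eq, tameAt_eq, nuAt_mul a h1 h2]
  have key : f ^ (nuAt a g₁ + nuAt a g₂) * (g₁ * g₂) ^ (-nuAt a f)
      = (f ^ nuAt a g₁ * g₁ ^ (-nuAt a f)) * (f ^ nuAt a g₂ * g₂ ^ (-nuAt a f)) := by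
    rw [mul_zpow, zpow_add₀ hf]; ring
  rw [key, evalAt_mul (mul_ne_zero (zpow_ne_zero _ hf) (zpow_ne_zero _ h1))
      (mul_ne_zero (zpow_ne_zero _ hf) (zpow_ne_zero _ h2))
      (nuAt_unit a hf h1) (nuAt_unit a hf h2),
    mul_add, zpow_add₀ (neg_one_ne_zero' (k := k))]
  ring

lemma tameInf_mul_left {f₁ f₂ g : RatFunc k} (h1 : f₁ ≠ 0) (h2 : f₂ ≠ 0)
    (hg : g ≠ 0) : tameInf (f₁ * f₂) g = tameInf f₁ g * tameInf f₂ g := by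
  rw [tameInf_eq, tameInf_eq, tameInf_eq, nuInf_mul h1 h2]
  have key : (f₁ * f₂) ^ nuInf g * g ^ (-(nuInf f₁ + nuInf f₂))
      = (f₁ ^ nuInf g * g ^ (-nuInf f₁)) * (f₂ ^ nuInf g * g ^ (-nuInf f₂)) := by
    rw [mul_zpow, neg_add, zpow_add₀ hg]; ring
  rw [key, lead_mul (mul_ne_zero (zpow_ne_zero _ h1) (zpow_ne_zero _ hg))
      (mul_ne_zero (zpow_ne_zero _ h2) (zpow_ne_zero _ hg)),
    add_mul, zpow_add₀ (neg_one_ne_zero' (k := k))]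
  ring

lemma tameInf_mul_right {f g₁ g₂ : RatFunc k} (hf : f ≠ 0) (h1 : g₁ ≠ 0)
    (h2 : g₂ ≠ 0) : tameInf f (g₁ * g₂) = tameInf f g₁ * tameInf f g₂ := by
  rw [tameInf_eq, tameInf_eq, tameInf_eq, nuInf_mul h1 h2]
  have key : f ^ (nuInf g₁ + nuInf g₂) * (g₁ * g₂) ^ (-nuInf f)
      = (f ^ nuInf g₁ * g₁ ^ (-nuInf f)) * (f ^ nuInf g₂ * g₂ ^ (-nuInf f)) := by
    rw [mul_zpow, zpow_add₀ hf]; ring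
  rw [key, lead_mul (mul_ne_zero (zpow_ne_zero _ hf) (zpow_ne_zero _ h1))
      (mul_ne_zero (zpow_ne_zero _ hf) (zpow_ne_zero _ h2)),
    mul_add, zpow_add₀ (neg_one_ne_zero' (k := k))]
  ring

lemma nuAt_eq_zero_of_not_root {a : k} {f : RatFunc k}
    (h1 : ¬ f.num.IsRoot a) (h2 : ¬ f.denom.IsRoot a) : nuAt a f = 0 := by
  rw [nuAt, rootMultiplicity_eq_zero h1, rootMultiplicity_eq_zero h2]
  ring

lemma tame_mulSupport_finite {f g : RatFunc k} (hf : f ≠ 0) (hg : g ≠ 0) :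
    (Function.mulSupport fun a => tameAt a f g).Finite := by
  apply Set.Finite.subset (s := {x | f.num.IsRoot x} ∪ {x | f.denom.IsRoot x}
    ∪ {x | g.num.IsRoot x} ∪ {x | g.denom.IsRoot x})
  · exact (((Polynomial.finite_setOf_isRoot (RatFunc.num_ne_zero hf)).union
      (Polynomial.finite_setOf_isRoot f.denom_ne_zero)).union
      (Polynomial.finite_setOf_isRoot (RatFunc.num_ne_zero hg))).union
      (Polynomial.finite_setOf_isRoot g.denom_ne_zero)
  · intro a ha
    by_contra hmem
    simp only [Set.mem_union, Set.mem_setOf_eq, not_or] at hmem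
    exact ha (tameAt_eq_one (nuAt_eq_zero_of_not_root hmem.1.1.1 hmem.1.1.2)
      (nuAt_eq_zero_of_not_root hmem.1.2 hmem.2))

/-- The full product of tame symbols. -/
noncomputable def W (f g : RatFunc k) : k := (∏ᶠ a, tameAt a f g) * tameInf f g

lemma W_mul_left {f₁ f₂ g : RatFunc k} (h1 : f₁ ≠ 0) (h2 : f₂ ≠ 0) (hg : g ≠ 0) :
    W (f₁ * f₂) g = W f₁ g * W f₂ g := by
  unfold W
  rw [finprod_congr fun a => tameAt_mul_left a h1 h2 hg,
    finprod_mul_distrib (tame_mulSupport_finite h1 hg) (tame_mulSupport_finite h2 hg),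
    tameInf_mul_left h1 h2 hg]
  ring

lemma W_mul_right {f g₁ g₂ : RatFunc k} (hf : f ≠ 0) (h1 : g₁ ≠ 0) (h2 : g₂ ≠ 0) :
    W f (g₁ * g₂) = W f g₁ * W f g₂ := by
  unfold W
  rw [finprod_congr fun a => tameAt_mul_right a hf h1 h2,
    finprod_mul_distrib (tame_mulSupport_finite hf h1) (tame_mulSupport_finite hf h2),
    tameInf_mul_right hf h1 h2]
  ring

end WeilAux

namespace WeilAux

variable {k : Type*} [Field k]

/-- the linear rational function `X - a` -/
noncomputable def lin (a : k) : RatFunc k := algebraMap k[X] (RatFunc k) (X - C a)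

/-- the constant rational function `c` -/
noncomputable def con (c : k) : RatFunc k := algebraMap k[X] (RatFunc k) (C c)

lemma lin_def (a : k) : algebraMap k[X] (RatFunc k) (X - C a) = lin a := rfl

lemma con_def (c : k) : algebraMap k[X] (RatFunc k) (C c) = con c := rfl

lemma lin_ne_zero (a : k) : lin a ≠ 0 :=
  RatFunc.algebraMap_ne_zero (X_sub_C_ne_zero a)

lemma con_ne_zero {c : k} (hc : c ≠ 0) : con c ≠ 0 :=
  RatFunc.algebraMap_ne_zero (C_ne_zero.mpr hc)

lemma nuAt_lin_self (a : k) : nuAt a (lin a) = 1 := by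
  rw [nuAt, lin, RatFunc.num_algebraMap, RatFunc.denom_algebraMap,
    rootMultiplicity_X_sub_C_self,
    rootMultiplicity_eq_zero (by simp [IsRoot] : ¬ IsRoot (1 : k[X]) a)]
  simp

lemma nuAt_lin_ne {p a : k} (h : p ≠ a) : nuAt p (lin a) = 0 := by
  rw [nuAt, lin, RatFunc.num_algebraMap, RatFunc.denom_algebraMap,
    rootMultiplicity_eq_zero (by simp [IsRoot, sub_eq_zero, h] : ¬ IsRoot (X - C a) p),
    rootMultiplicity_eq_zero (by simp [IsRoot] : ¬ IsRoot (1 : k[X]) p)]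
  simp

lemma nuAt_con {c : k} (hc : c ≠ 0) (p : k) : nuAt p (con c) = 0 := by
  rw [nuAt, con, RatFunc.num_algebraMap, RatFunc.denom_algebraMap,
    rootMultiplicity_eq_zero (by simp [IsRoot, hc] : ¬ IsRoot (C c) p),
    rootMultiplicity_eq_zero (by simp [IsRoot] : ¬ IsRoot (1 : k[X]) p)]
  simp

lemma nuInf_lin (a : k) : nuInf (lin a) = -1 := by
  rw [nuInf, lin, RatFunc.intDegree_polynomial, natDegree_X_sub_C]
  simp

lemma nuInf_con (c : k) : nuInf (con c) = 0 := by
  rw [nuInf, con, RatFunc.intDegree_polynomial, natDegree_C]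
  simp

lemma evalAt_lin (p a : k) : evalAt p (lin a) = p - a := by
  rw [lin, evalAt_algebraMap]; simp

lemma evalAt_con (p c : k) : evalAt p (con c) = c := by
  rw [con, evalAt_algebraMap]; simp

lemma lead_lin (a : k) : lead (lin a) = 1 := by
  rw [lin, lead_algebraMap]; exact (monic_X_sub_C a)

lemma lead_con (c : k) : lead (con c) = c := by
  rw [con, lead_algebraMap, leadingCoeff_C]

lemma W_con_con {c d : k} (hc : c ≠ 0) (hd : d ≠ 0) : W (con c) (con d) = 1 := by
  unfold W
  rw [finprod_eq_one_of_forall_eq_one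
      (fun a => tameAt_eq_one (nuAt_con hc a) (nuAt_con hd a)), one_mul,
    tameInf_eq, nuInf_con c, nuInf_con d]
  norm_num [lead_one]

lemma W_con_lin {c : k} (hc : c ≠ 0) (b : k) : W (con c) (lin b) = 1 := by
  unfold W
  have hfin : (∏ᶠ a, tameAt a (con c) (lin b)) = c := by
    rw [finprod_eq_single _ b
      (fun x hx => tameAt_eq_one (nuAt_con hc x) (nuAt_lin_ne hx)),
      tameAt_eq, nuAt_con hc b, nuAt_lin_self b]
    norm_num [evalAt_con]
  rw [hfin, tameInf_eq, nuInf_con c, nuInf_lin b]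
  norm_num [lead_inv (con_ne_zero hc), lead_con]
  exact mul_inv_cancel₀ hc

lemma W_lin_con (a : k) {d : k} (hd : d ≠ 0) : W (lin a) (con d) = 1 := by
  unfold W
  have hfin : (∏ᶠ p, tameAt p (lin a) (con d)) = d⁻¹ := by
    rw [finprod_eq_single _ a
      (fun x hx => tameAt_eq_one (nuAt_lin_ne hx) (nuAt_con hd x)),
      tameAt_eq, nuAt_con hd a, nuAt_lin_self a]
    norm_num [evalAt_inv (con_ne_zero hd) (nuAt_con hd a), evalAt_con]
  rw [hfin, tameInf_eq, nuInf_con d, nuInf_lin a]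
  norm_num [lead_con]
  exact inv_mul_cancel₀ hd

lemma W_lin_lin_self (a : k) : W (lin a) (lin a) = 1 := by
  unfold W
  have hfin : (∏ᶠ p, tameAt p (lin a) (lin a)) = -1 := by
    rw [finprod_eq_single _ a
      (fun x hx => tameAt_eq_one (nuAt_lin_ne hx) (nuAt_lin_ne hx)),
      tameAt_eq, nuAt_lin_self a]
    norm_num [mul_inv_cancel₀ (lin_ne_zero a), evalAt_one]
  rw [hfin, tameInf_eq, nuInf_lin a]
  norm_num [inv_mul_cancel₀ (lin_ne_zero a), lead_one]

lemma W_lin_lin_ne {a b : k} (hab : a ≠ b) : W (lin a) (lin b) = 1 := by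
  classical
  unfold W
  have hsub : Function.mulSupport (fun p => tameAt p (lin a) (lin b))
      ⊆ ↑({a, b} : Finset k) := by
    intro p hp
    by_contra hmem
    simp only [Finset.coe_insert, Finset.coe_singleton, Set.mem_insert_iff,
      Set.mem_singleton_iff, not_or] at hmem
    exact hp (tameAt_eq_one (nuAt_lin_ne hmem.1) (nuAt_lin_ne hmem.2))
  rw [finprod_eq_prod_of_mulSupport_subset _ hsub, Finset.prod_pair hab]
  have hab' : a - b ≠ 0 := sub_ne_zero.mpr hab
  have h1 : tameAt a (lin a) (lin b) = (a - b)⁻¹ := by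
    rw [tameAt_eq, nuAt_lin_self a, nuAt_lin_ne hab]
    norm_num [evalAt_inv (lin_ne_zero b) (nuAt_lin_ne hab), evalAt_lin]
  have h2 : tameAt b (lin a) (lin b) = b - a := by
    rw [tameAt_eq, nuAt_lin_self b, nuAt_lin_ne (Ne.symm hab)]
    norm_num [evalAt_lin]
  have h3 : tameInf (lin a) (lin b) = -1 := by
    rw [tameInf_eq, nuInf_lin a, nuInf_lin b]
    have hl : lead ((lin a)⁻¹ * lin b) = 1 := by
      rw [lead_mul (inv_ne_zero (lin_ne_zero a)) (lin_ne_zero b),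
        lead_inv (lin_ne_zero a), lead_lin, lead_lin]
      norm_num
    norm_num [hl]
  rw [h1, h2, h3]
  field_simp
  ring

lemma W_lin_lin (a b : k) : W (lin a) (lin b) = 1 := by
  by_cases h : a = b
  · subst h; exact W_lin_lin_self a
  · exact W_lin_lin_ne h

lemma W_poly_left [IsAlgClosed k] {g : RatFunc k} (hg : g ≠ 0)
    (hlin : ∀ a : k, W (lin a) g = 1) (hcon : ∀ c : k, c ≠ 0 → W (con c) g = 1) :
    ∀ (n : ℕ) (p : k[X]), p.natDegree = n → p ≠ 0 →
      W (algebraMap k[X] (RatFunc k) p) g = 1 := by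
  intro n
  induction n using Nat.strong_induction_on with
  | _ n ih =>
    intro p hdeg hp
    rcases Nat.eq_zero_or_pos n with h0 | h0
    · obtain ⟨c, rfl⟩ := natDegree_eq_zero.mp (by rw [hdeg, h0])
      exact hcon c (fun hc => hp (by rw [hc, map_zero]))
    · have hdeg' : p.degree ≠ 0 := by
        intro h
        have h' : p.natDegree = 0 := natDegree_eq_zero_iff_degree_le_zero.mpr h.le
        omega
      obtain ⟨a, ha⟩ := IsAlgClosed.exists_root p hdeg'
      obtain ⟨q, rfl⟩ := dvd_iff_isRoot.mpr ha
      have hq : q ≠ 0 := fun h => hp (by rw [h, mul_zero])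
      have hdq : q.natDegree < n := by
        rw [← hdeg, natDegree_mul (X_sub_C_ne_zero a) hq, natDegree_X_sub_C]; omega
      rw [map_mul, lin_def,
        W_mul_left (lin_ne_zero a) (RatFunc.algebraMap_ne_zero hq) hg,
        hlin a, ih _ hdq q rfl hq, one_mul]

lemma W_left [IsAlgClosed k] {g : RatFunc k} (hg : g ≠ 0)
    (hlin : ∀ a : k, W (lin a) g = 1) (hcon : ∀ c : k, c ≠ 0 → W (con c) g = 1)
    {f : RatFunc k} (hf : f ≠ 0) : W f g = 1 := by
  have hden : algebraMap k[X] (RatFunc k) f.denom ≠ 0 :=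
    RatFunc.algebraMap_ne_zero f.denom_ne_zero
  have key : f * algebraMap k[X] (RatFunc k) f.denom = algebraMap k[X] (RatFunc k) f.num :=
    ((div_eq_iff hden).mp f.num_div_denom).symm
  have h1 := W_poly_left hg hlin hcon f.num.natDegree f.num rfl (RatFunc.num_ne_zero hf)
  have h2 := W_poly_left hg hlin hcon f.denom.natDegree f.denom rfl f.denom_ne_zero
  have h3 := W_mul_left hf hden hg
  rw [key, h1, h2, mul_one] at h3
  exact h3.symm

lemma W_poly_right [IsAlgClosed k] {f : RatFunc k} (hf : f ≠ 0)
    (hlin : ∀ b : k, W f (lin b) = 1) (hcon : ∀ d : k, d ≠ 0 → W f (con d) = 1) :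
    ∀ (n : ℕ) (p : k[X]), p.natDegree = n → p ≠ 0 →
      W f (algebraMap k[X] (RatFunc k) p) = 1 := by
  intro n
  induction n using Nat.strong_induction_on with
  | _ n ih =>
    intro p hdeg hp
    rcases Nat.eq_zero_or_pos n with h0 | h0
    · obtain ⟨c, rfl⟩ := natDegree_eq_zero.mp (by rw [hdeg, h0])
      exact hcon c (fun hc => hp (by rw [hc, map_zero]))
    · have hdeg' : p.degree ≠ 0 := by
        intro h
        have h' : p.natDegree = 0 := natDegree_eq_zero_iff_degree_le_zero.mpr h.le
        omega
      obtain ⟨a, ha⟩ := IsAlgClosed.exists_root p hdeg'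
      obtain ⟨q, rfl⟩ := dvd_iff_isRoot.mpr ha
      have hq : q ≠ 0 := fun h => hp (by rw [h, mul_zero])
      have hdq : q.natDegree < n := by
        rw [← hdeg, natDegree_mul (X_sub_C_ne_zero a) hq, natDegree_X_sub_C]; omega
      rw [map_mul, lin_def,
        W_mul_right hf (lin_ne_zero a) (RatFunc.algebraMap_ne_zero hq),
        hlin a, ih _ hdq q rfl hq, one_mul]

lemma W_right [IsAlgClosed k] {f : RatFunc k} (hf : f ≠ 0)
    (hlin : ∀ b : k, W f (lin b) = 1) (hcon : ∀ d : k, d ≠ 0 → W f (con d) = 1)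
    {g : RatFunc k} (hg : g ≠ 0) : W f g = 1 := by
  have hden : algebraMap k[X] (RatFunc k) g.denom ≠ 0 :=
    RatFunc.algebraMap_ne_zero g.denom_ne_zero
  have key : g * algebraMap k[X] (RatFunc k) g.denom = algebraMap k[X] (RatFunc k) g.num :=
    ((div_eq_iff hden).mp g.num_div_denom).symm
  have h1 := W_poly_right hf hlin hcon g.num.natDegree g.num rfl (RatFunc.num_ne_zero hg)
  have h2 := W_poly_right hf hlin hcon g.denom.natDegree g.denom rfl g.denom_ne_zero
  have h3 := W_mul_right hf hg hden
  rw [key, h1, h2, mul_one] at h3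
  exact h3.symm

end WeilAux


/-- Weil reciprocity for `ℙ¹` over an algebraically closed field: the product over all
closed points (finite points and `∞`) of the tame symbols of two nonzero rational
functions equals `1`. -/
theorem stmt15 {k : Type*} [Field k] [IsAlgClosed k] (f g : RatFunc k)
    (hf : f ≠ 0) (hg : g ≠ 0) :
    (∏ᶠ a : k, tameAt a f g) * tameInf f g = 1 := by
  have key : WeilAux.W f g = 1 := by
    apply WeilAux.W_right hf ?_ ?_ hg
    · intro b
      exact WeilAux.W_left (WeilAux.lin_ne_zero b)
        (fun a => WeilAux.W_lin_lin a b) (fun c hc => WeilAux.W_con_lin hc b) hf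
    · intro d hd
      exact WeilAux.W_left (WeilAux.con_ne_zero hd)
        (fun a => WeilAux.W_lin_con a hd) (fun c hc => WeilAux.W_con_con hc hd) hf
  exact key
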